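/- If Λ is a word in the alphabet {0, 1, y, y⁻¹} with no potential cancellations and containing n occurrences of y or y⁻¹, then there exists a finite binary word u such that the concatenation Λ·u can be advanced (by repeated application of the rewriting rules) to a word of the form s·yⁿ for some finite binary word s. -/

import Mathlib

/-- The alphabet {0, 1, y, y⁻¹}. -/
inductive YSym : Type
  | b0 : YSym
  | b1 : YSym
  | yp : YSym
  | ym : YSym
deriving DecidableEq

/-- Whether a symbol is y or y⁻¹. -/
def isY : YSym → Bool
  | YSym.yp => true
  | YSym.ym => true
  | _ => false

/-- The six advancement rules: y00→0y, y01→10y⁻¹, y1→11y,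
y⁻¹0→00y⁻¹, y⁻¹10→01y, y⁻¹11→1y⁻¹. -/
inductive Rule : List YSym → List YSym → Prop
  | r1 : Rule [YSym.yp, YSym.b0, YSym.b0] [YSym.b0, YSym.yp]
  | r2 : Rule [YSym.yp, YSym.b0, YSym.b1] [YSym.b1, YSym.b0, YSym.ym]
  | r3 : Rule [YSym.yp, YSym.b1] [YSym.b1, YSym.b1, YSym.yp]
  | r4 : Rule [YSym.ym, YSym.b0] [YSym.b0, YSym.b0, YSym.ym]
  | r5 : Rule [YSym.ym, YSym.b1, YSym.b0] [YSym.b0, YSym.b1, YSym.yp]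
  | r6 : Rule [YSym.ym, YSym.b1, YSym.b1] [YSym.b1, YSym.ym]

/-- Advancing the i-th occurrence of y or y⁻¹ in a word. -/
def AdvanceAt (i : ℕ) (w w' : List YSym) : Prop :=
  ∃ u l r v, Rule l r ∧ w = u ++ l ++ v ∧ w' = u ++ r ++ v ∧
    u.countP (fun a => isY a) = i

/-- Advancing some occurrence of y or y⁻¹. -/
def Advance (w w' : List YSym) : Prop := ∃ i, AdvanceAt i w w'

/-- The word contains an adjacent pair y y⁻¹ or y⁻¹ y. -/
def HasCancel (w : List YSym) : Prop :=
  ∃ u v, w = u ++ [YSym.yp, YSym.ym] ++ v ∨ w = u ++ [YSym.ym, YSym.yp] ++ v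

/-- The i-th occurrence of y± in w is a potential cancellation. -/
def PotentialCancellation (i : ℕ) (w : List YSym) : Prop :=
  ∃ w', Relation.ReflTransGen (AdvanceAt i) w w' ∧ HasCancel w'

/-- The inclusion of finite binary words into words over {0, 1, y, y⁻¹}. -/
def ofBits (u : List Bool) : List YSym :=
  u.map (fun b => if b then YSym.b1 else YSym.b0)

/-- sign to symbol -/
def sym : Bool → YSym
  | true => YSym.yp
  | false => YSym.ym

/-- journey of a y over a finite bit string: final sign and unconsumed remainder -/
def run : Bool → List Bool → Bool × List Bool
  | s, [] => (s, [])
  | true, [false] => (true, [false])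
  | true, false :: false :: t => run true t
  | true, false :: true :: t => run false t
  | true, true :: t => run true t
  | false, false :: t => run false t
  | false, [true] => (false, [true])
  | false, true :: false :: t => run true t
  | false, true :: true :: t => run false t

/-- bits emitted to the left during the journey -/
def emit : Bool → List Bool → List Bool
  | _, [] => []
  | true, [false] => []
  | true, false :: false :: t => false :: emit true t
  | true, false :: true :: t => true :: false :: emit false t
  | true, true :: t => true :: true :: emit true t
  | false, false :: t => false :: false :: emit false t
  | false, [true] => []
  | false, true :: false :: t => false :: true :: emit true t
  | false, true :: true :: t => true :: emit false t

theorem run_append (s : Bool) (w z : List Bool) :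
    run s (w ++ z) = run (run s w).1 ((run s w).2 ++ z) := by
  induction s, w using run.induct <;> simp_all [run]

theorem emit_append (s : Bool) (w z : List Bool) :
    emit s (w ++ z) = emit s w ++ emit (run s w).1 ((run s w).2 ++ z) := by
  induction s, w using run.induct <;> simp_all [run, emit]

theorem run_shape (s : Bool) (w : List Bool) :
    (run s w).2 = [] ∨ run s w = (true, [false]) ∨ run s w = (false, [true]) := by
  induction s, w using run.induct <;> simp_all [run]
/-- no-cancellation condition: gap h after a y of sign a, next y of sign b -/
def NC (a : Bool) (h : List Bool) (b : Bool) : Prop :=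
  (run a h).2 = [] → (run a h).1 = b

theorem crux {a : Bool} {h : List Bool} {b b' : Bool} {e : List Bool}
    (hbe : (b = true ∧ e = [false] ∧ b' = true) ∨
           (b = true ∧ e = [true, false] ∧ b' = false) ∨
           (b = true ∧ e = [true, true] ∧ b' = true) ∨
           (b = false ∧ e = [false, false] ∧ b' = false) ∨
           (b = false ∧ e = [false, true] ∧ b' = true) ∨
           (b = false ∧ e = [true] ∧ b' = false))
    (hc : NC a h b) : NC a (h ++ e) b' := by
  unfold NC at *
  rw [run_append]
  rcases run_shape a h with h1 | h1 | h1 <;>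
    rcases hbe with ⟨rfl,rfl,rfl⟩|⟨rfl,rfl,rfl⟩|⟨rfl,rfl,rfl⟩|⟨rfl,rfl,rfl⟩|⟨rfl,rfl,rfl⟩|⟨rfl,rfl,rfl⟩ <;>
    simp_all [run] <;>
  · rw [hc rfl]; simp [run]

theorem transport {b : Bool} {z : List Bool} {a : Bool} {h : List Bool}
    (hc : NC a h b) (hz : (run b z).2 = []) :
    NC a (h ++ emit b z) (run b z).1 := by
  induction b, z using run.induct generalizing h with
  | case1 s => simpa [run, emit] using hc
  | case2 => simp [run] at hz
  | case3 t ih =>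
    have := ih (crux (Or.inl ⟨rfl, rfl, rfl⟩) hc) (by simpa [run] using hz)
    simpa [run, emit, List.append_assoc] using this
  | case4 t ih =>
    have := ih (crux (Or.inr (Or.inl ⟨rfl, rfl, rfl⟩)) hc) (by simpa [run] using hz)
    simpa [run, emit, List.append_assoc] using this
  | case5 t ih =>
    have := ih (crux (Or.inr (Or.inr (Or.inl ⟨rfl, rfl, rfl⟩))) hc) (by simpa [run] using hz)
    simpa [run, emit, List.append_assoc] using this
  | case6 t ih =>
    have := ih (crux (Or.inr (Or.inr (Or.inr (Or.inl ⟨rfl, rfl, rfl⟩)))) hc)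
      (by simpa [run] using hz)
    simpa [run, emit, List.append_assoc] using this
  | case7 => simp [run] at hz
  | case8 t ih =>
    have := ih (crux (Or.inr (Or.inr (Or.inr (Or.inr (Or.inl ⟨rfl, rfl, rfl⟩))))) hc)
      (by simpa [run] using hz)
    simpa [run, emit, List.append_assoc] using this
  | case9 t ih =>
    have := ih (crux (Or.inr (Or.inr (Or.inr (Or.inr (Or.inr ⟨rfl, rfl, rfl⟩))))) hc)
      (by simpa [run] using hz)
    simpa [run, emit, List.append_assoc] using this
theorem ofBits_append (a b : List Bool) : ofBits (a ++ b) = ofBits a ++ ofBits b :=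
  List.map_append

theorem countP_ofBits (p : List Bool) : (ofBits p).countP (fun a => isY a) = 0 := by
  induction p with
  | nil => rfl
  | cons x t ih => cases x <;> simp [ofBits, List.countP_cons, isY] at * <;> simpa [ofBits] using ih

theorem journey0 (s : Bool) (w : List Bool) (p : List Bool) (v : List YSym) :
    Relation.ReflTransGen (AdvanceAt 0)
      (ofBits p ++ [sym s] ++ ofBits w ++ v)
      (ofBits (p ++ emit s w) ++ [sym (run s w).1] ++ ofBits (run s w).2 ++ v) := by
  induction s, w using run.induct generalizing p with
  | case1 s => simp only [emit, run, List.append_nil]; exact Relation.ReflTransGen.refl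
  | case2 => simp only [emit, run, List.append_nil]; exact Relation.ReflTransGen.refl
  | case7 => simp only [emit, run, List.append_nil]; exact Relation.ReflTransGen.refl
  | case3 t ih =>
    have adv : AdvanceAt 0 (ofBits p ++ [sym true] ++ ofBits (false :: false :: t) ++ v)
        (ofBits (p ++ [false]) ++ [sym true] ++ ofBits t ++ v) :=
      ⟨ofBits p, _, _, ofBits t ++ v, Rule.r1, by simp [ofBits, sym], by simp [ofBits, sym],
        countP_ofBits p⟩
    exact Relation.ReflTransGen.head adv
      (by simpa [run, emit, ofBits, List.append_assoc] using ih (p ++ [false]))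
  | case4 t ih =>
    have adv : AdvanceAt 0 (ofBits p ++ [sym true] ++ ofBits (false :: true :: t) ++ v)
        (ofBits (p ++ [true, false]) ++ [sym false] ++ ofBits t ++ v) :=
      ⟨ofBits p, _, _, ofBits t ++ v, Rule.r2, by simp [ofBits, sym], by simp [ofBits, sym],
        countP_ofBits p⟩
    exact Relation.ReflTransGen.head adv
      (by simpa [run, emit, ofBits, List.append_assoc] using ih (p ++ [true, false]))
  | case5 t ih =>
    have adv : AdvanceAt 0 (ofBits p ++ [sym true] ++ ofBits (true :: t) ++ v)
        (ofBits (p ++ [true, true]) ++ [sym true] ++ ofBits t ++ v) :=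
      ⟨ofBits p, _, _, ofBits t ++ v, Rule.r3, by simp [ofBits, sym], by simp [ofBits, sym],
        countP_ofBits p⟩
    exact Relation.ReflTransGen.head adv
      (by simpa [run, emit, ofBits, List.append_assoc] using ih (p ++ [true, true]))
  | case6 t ih =>
    have adv : AdvanceAt 0 (ofBits p ++ [sym false] ++ ofBits (false :: t) ++ v)
        (ofBits (p ++ [false, false]) ++ [sym false] ++ ofBits t ++ v) :=
      ⟨ofBits p, _, _, ofBits t ++ v, Rule.r4, by simp [ofBits, sym], by simp [ofBits, sym],
        countP_ofBits p⟩
    exact Relation.ReflTransGen.head adv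
      (by simpa [run, emit, ofBits, List.append_assoc] using ih (p ++ [false, false]))
  | case8 t ih =>
    have adv : AdvanceAt 0 (ofBits p ++ [sym false] ++ ofBits (true :: false :: t) ++ v)
        (ofBits (p ++ [false, true]) ++ [sym true] ++ ofBits t ++ v) :=
      ⟨ofBits p, _, _, ofBits t ++ v, Rule.r5, by simp [ofBits, sym], by simp [ofBits, sym],
        countP_ofBits p⟩
    exact Relation.ReflTransGen.head adv
      (by simpa [run, emit, ofBits, List.append_assoc] using ih (p ++ [false, true]))
  | case9 t ih =>
    have adv : AdvanceAt 0 (ofBits p ++ [sym false] ++ ofBits (true :: true :: t) ++ v)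
        (ofBits (p ++ [true]) ++ [sym false] ++ ofBits t ++ v) :=
      ⟨ofBits p, _, _, ofBits t ++ v, Rule.r6, by simp [ofBits, sym], by simp [ofBits, sym],
        countP_ofBits p⟩
    exact Relation.ReflTransGen.head adv
      (by simpa [run, emit, ofBits, List.append_assoc] using ih (p ++ [true]))

theorem advanceAt_prepend (Q : List YSym) {i : ℕ} {w w' : List YSym} (h : AdvanceAt i w w') :
    AdvanceAt (Q.countP (fun a => isY a) + i) (Q ++ w) (Q ++ w') := by
  obtain ⟨u, l, r, v, hr, hw, hw', hc⟩ := h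
  exact ⟨Q ++ u, l, r, v, hr, by simp [hw], by simp [hw'], by simp [List.countP_append, hc]⟩

theorem advanceAt_append (V : List YSym) {i : ℕ} {w w' : List YSym} (h : AdvanceAt i w w') :
    AdvanceAt i (w ++ V) (w' ++ V) := by
  obtain ⟨u, l, r, v, hr, hw, hw', hc⟩ := h
  exact ⟨u, l, r, v ++ V, hr, by simp [hw], by simp [hw'], hc⟩

theorem rtg_advanceAt_prepend (Q : List YSym) {i : ℕ} {w w' : List YSym}
    (h : Relation.ReflTransGen (AdvanceAt i) w w') :
    Relation.ReflTransGen (AdvanceAt (Q.countP (fun a => isY a) + i)) (Q ++ w) (Q ++ w') := by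
  induction h with
  | refl => exact Relation.ReflTransGen.refl
  | tail _ h2 ih => exact ih.tail (advanceAt_prepend Q h2)

theorem rtg_adv_of_adv {i : ℕ} {w w' : List YSym}
    (h : Relation.ReflTransGen (AdvanceAt i) w w') : Relation.ReflTransGen Advance w w' :=
  Relation.ReflTransGen.mono (fun _ _ hab => (⟨i, hab⟩ : Advance _ _)) w w' h

theorem rtg_adv_prepend (Q : List YSym) {w w' : List YSym}
    (h : Relation.ReflTransGen Advance w w') :
    Relation.ReflTransGen Advance (Q ++ w) (Q ++ w') := by
  induction h with
  | refl => exact Relation.ReflTransGen.refl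
  | tail _ h2 ih =>
    obtain ⟨i, h2⟩ := h2
    exact ih.tail ⟨_, advanceAt_prepend Q h2⟩

theorem rtg_adv_append (V : List YSym) {w w' : List YSym}
    (h : Relation.ReflTransGen Advance w w') :
    Relation.ReflTransGen Advance (w ++ V) (w' ++ V) := by
  induction h with
  | refl => exact Relation.ReflTransGen.refl
  | tail _ h2 ih =>
    obtain ⟨i, h2⟩ := h2
    exact ih.tail ⟨i, advanceAt_append V h2⟩

/-- general journey with arbitrary prefix, as Advance chain -/
theorem journey (s : Bool) (w : List Bool) (P v : List YSym) :
    Relation.ReflTransGen Advance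
      (P ++ [sym s] ++ ofBits w ++ v)
      (P ++ ofBits (emit s w) ++ [sym (run s w).1] ++ ofBits (run s w).2 ++ v) := by
  have := rtg_adv_prepend P (rtg_adv_of_adv (journey0 s w [] v))
  simpa [ofBits, List.append_assoc] using this
theorem run_zeros (k : ℕ) : run true (List.replicate (2 * k) false) = (true, []) := by
  induction k with
  | zero => rfl
  | succ n ih =>
    have h : 2 * (n + 1) = (2 * n) + 1 + 1 := by ring
    rw [h, List.replicate_succ, List.replicate_succ]
    simpa [run] using ih

theorem emit_zeros (k : ℕ) :
    emit true (List.replicate (2 * k) false) = List.replicate k false := by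
  induction k with
  | zero => rfl
  | succ n ih =>
    have h : 2 * (n + 1) = (2 * n) + 1 + 1 := by ring
    rw [h, List.replicate_succ, List.replicate_succ]
    simpa [emit, List.replicate_succ] using ih

theorem relay (j k : ℕ) :
    Relation.ReflTransGen Advance
      (List.replicate j (sym true) ++ ofBits (List.replicate (2 ^ j * k) false))
      (ofBits (List.replicate k false) ++ List.replicate j (sym true)) := by
  induction j with
  | zero => simpa using Relation.ReflTransGen.refl
  | succ n ih =>
    have h1 : (2:ℕ) ^ (n + 1) * k = 2 * (2 ^ n * k) := by ring
    have hrep : List.replicate (n + 1) (sym true)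
        = List.replicate n (sym true) ++ [sym true] := by
      rw [← List.replicate_succ']
    have step1 := journey true (List.replicate (2 * (2 ^ n * k)) false)
      (List.replicate n (sym true)) []
    rw [run_zeros, emit_zeros] at step1
    have s1' : Relation.ReflTransGen Advance
        (List.replicate (n+1) (sym true) ++ ofBits (List.replicate (2 ^ (n+1) * k) false))
        (List.replicate n (sym true) ++ ofBits (List.replicate (2 ^ n * k) false)
          ++ [sym true]) := by
      simpa [hrep, h1, ofBits, List.append_assoc] using step1
    have s2' : Relation.ReflTransGen Advance
        (List.replicate n (sym true) ++ ofBits (List.replicate (2 ^ n * k) false)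
          ++ [sym true])
        (ofBits (List.replicate k false) ++ List.replicate (n+1) (sym true)) := by
      simpa [hrep, List.append_assoc] using rtg_adv_append [sym true] ih
    exact s1'.trans s2'
def toW : List Bool → List (Bool × List Bool) → List YSym
  | g, [] => ofBits g
  | g, (b, h) :: r => ofBits g ++ [sym b] ++ toW h r

def headS : List (Bool × List Bool) → Bool
  | [] => true
  | (c, _) :: _ => c

def chain : List (Bool × List Bool) → Prop
  | (a, h) :: (b, g) :: r => NC a h b ∧ chain ((b, g) :: r)
  | _ => True

theorem main : ∀ L : List (Bool × List Bool), chain L →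
    ∃ u E : List Bool,
      (∀ g₀ : List Bool, Relation.ReflTransGen Advance (toW g₀ L ++ ofBits u)
        (ofBits (g₀ ++ E) ++ List.replicate L.length (sym true)))
      ∧ ∀ (a : Bool) (h : List Bool), NC a h (headS L) → NC a (h ++ E) true := by
  intro L
  induction L with
  | nil =>
    intro _
    refine ⟨[], [], fun g₀ => ?_, fun a h hc => by simpa [headS] using hc⟩
    simpa [toW, ofBits] using Relation.ReflTransGen.refl
  | cons hd rest ih =>
    obtain ⟨b, g⟩ := hd
    intro hch
    cases rest with
    | nil =>
      -- single rightmost y: park it manually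
      have hext : ∃ ext : List Bool, run b (g ++ ext) = (true, []) := by
        rcases run_shape b g with h1 | h1 | h1
        · cases hsg : (run b g).1 with
          | true =>
            have hpair : run b g = (true, []) := by simp [Prod.ext_iff, hsg, h1]
            exact ⟨[], by rw [run_append, hpair]; simp [run]⟩
          | false =>
            have hpair : run b g = (false, []) := by simp [Prod.ext_iff, hsg, h1]
            exact ⟨[true, false], by rw [run_append, hpair]; simp [run]⟩
        · exact ⟨[false], by rw [run_append, h1]; simp [run]⟩
        · exact ⟨[false], by rw [run_append, h1]; simp [run]⟩
      obtain ⟨ext, hre⟩ := hext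
      refine ⟨ext, emit b (g ++ ext), fun g₀ => ?_, fun a h hc => ?_⟩
      · have := journey b (g ++ ext) (ofBits g₀) []
        rw [hre] at this
        simpa [toW, ofBits_append, List.append_assoc, show ofBits [] = [] from rfl] using this
      · simp only [headS] at hc
        have := transport (z := g ++ ext) hc (by rw [hre])
        rwa [hre] at this
    | cons hd2 r2 =>
      obtain ⟨c, g2⟩ := hd2
      obtain ⟨hc1, hch2⟩ := hch
      obtain ⟨u', E', h1', h2'⟩ := ih hch2
      have hbc : NC b (g ++ E') true := h2' b g hc1
      have hz : ∃ z : ℕ, run b ((g ++ E') ++ List.replicate z false) = (true, []) := by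
        rcases run_shape b (g ++ E') with h1 | h1 | h1
        · have hpair : run b (g ++ E') = (true, []) := by simp [Prod.ext_iff, hbc h1, h1]
          exact ⟨0, by rw [run_append, hpair]; simp [run]⟩
        · exact ⟨1, by rw [run_append, h1]; simp [run]⟩
        · exact ⟨1, by rw [run_append, h1]; simp [run]⟩
      obtain ⟨z, hre⟩ := hz
      set rest := (c, g2) :: r2 with hrest
      set n' := rest.length with hn'
      refine ⟨u' ++ List.replicate (2 ^ n' * z) false,
        emit b ((g ++ E') ++ List.replicate z false), fun g₀ => ?_, fun a h hc => ?_⟩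
      · have s1 : Relation.ReflTransGen Advance
            (toW g₀ ((b, g) :: rest) ++ ofBits (u' ++ List.replicate (2 ^ n' * z) false))
            (ofBits g₀ ++ [sym b] ++ ofBits (g ++ E') ++ List.replicate n' (sym true)
              ++ ofBits (List.replicate (2 ^ n' * z) false)) := by
          have := rtg_adv_prepend (ofBits g₀ ++ [sym b])
            (rtg_adv_append (ofBits (List.replicate (2 ^ n' * z) false)) (h1' g))
          simpa [toW, ofBits_append, List.append_assoc] using this
        have s2 : Relation.ReflTransGen Advance
            (ofBits g₀ ++ [sym b] ++ ofBits (g ++ E') ++ List.replicate n' (sym true)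
              ++ ofBits (List.replicate (2 ^ n' * z) false))
            (ofBits g₀ ++ [sym b] ++ ofBits (g ++ E') ++ ofBits (List.replicate z false)
              ++ List.replicate n' (sym true)) := by
          simpa [List.append_assoc] using
            rtg_adv_prepend (ofBits g₀ ++ [sym b] ++ ofBits (g ++ E')) (relay n' z)
        have s3 : Relation.ReflTransGen Advance
            (ofBits g₀ ++ [sym b] ++ ofBits (g ++ E') ++ ofBits (List.replicate z false)
              ++ List.replicate n' (sym true))
            (ofBits (g₀ ++ emit b ((g ++ E') ++ List.replicate z false))
              ++ List.replicate ((b, g) :: rest).length (sym true)) := by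
          have := journey b ((g ++ E') ++ List.replicate z false) (ofBits g₀)
            (List.replicate n' (sym true))
          rw [hre] at this
          simpa [ofBits_append, List.append_assoc, List.replicate_succ, hn', show ofBits [] = [] from rfl] using this
        exact (s1.trans s2).trans s3
      · simp only [headS] at hc
        have := transport (z := (g ++ E') ++ List.replicate z false) hc (by rw [hre])
        rw [hre] at this
        simpa [List.append_assoc] using this
@[simp] theorem isY_b0 : isY YSym.b0 = false := rfl
@[simp] theorem isY_b1 : isY YSym.b1 = false := rfl
@[simp] theorem isY_yp : isY YSym.yp = true := rfl
@[simp] theorem isY_ym : isY YSym.ym = true := rfl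
@[simp] theorem sym_true : sym true = YSym.yp := rfl
@[simp] theorem sym_false : sym false = YSym.ym := rfl
@[simp] theorem ofBits_nil : ofBits [] = [] := rfl

def parse : List YSym → List Bool × List (Bool × List Bool)
  | [] => ([], [])
  | YSym.b0 :: t => ((false :: (parse t).1), (parse t).2)
  | YSym.b1 :: t => ((true :: (parse t).1), (parse t).2)
  | YSym.yp :: t => ([], (true, (parse t).1) :: (parse t).2)
  | YSym.ym :: t => ([], (false, (parse t).1) :: (parse t).2)

theorem toW_cons (x : Bool) (g : List Bool) (L : List (Bool × List Bool)) :
    toW (x :: g) L = (if x then YSym.b1 else YSym.b0) :: toW g L := by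
  cases L with
  | nil => simp [toW, ofBits]
  | cons hd r => obtain ⟨b, h⟩ := hd; simp [toW, ofBits]

theorem toW_parse (w : List YSym) : toW (parse w).1 (parse w).2 = w := by
  induction w with
  | nil => rfl
  | cons x t ih =>
    cases x <;> simp [parse, toW_cons, toW, ofBits, sym, ih]

theorem count_parse (w : List YSym) :
    w.countP (fun a => isY a) = (parse w).2.length := by
  induction w with
  | nil => rfl
  | cons x t ih => cases x <;> simp [parse, List.countP_cons, ih]

theorem hasCancel_pair (p : List Bool) (b : Bool) (v : List YSym) :
    HasCancel (ofBits p ++ [sym (!b), sym b] ++ v) := by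
  cases b
  · exact ⟨ofBits p, v, Or.inl rfl⟩
  · exact ⟨ofBits p, v, Or.inr rfl⟩

theorem chain_of_hyp : ∀ (L : List (Bool × List Bool)) (g₀ : List Bool),
    (∀ j, ¬ PotentialCancellation j (toW g₀ L)) → chain L := by
  intro L
  induction L with
  | nil => intro _ _; trivial
  | cons hd rest ih =>
    obtain ⟨a, h⟩ := hd
    intro g₀ hyp
    cases rest with
    | nil => trivial
    | cons hd2 r =>
      obtain ⟨b, g⟩ := hd2
      constructor
      · -- NC a h b
        intro h2
        by_contra hne
        have hs : (run a h).1 = !b := by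
          cases b <;> cases hsg : (run a h).1 <;> simp_all
        have hj := journey0 a h g₀ ([sym b] ++ toW g r)
        rw [hs, h2] at hj
        refine hyp 0 ⟨ofBits (g₀ ++ emit a h) ++ [sym !b] ++ ofBits [] ++ ([sym b] ++ toW g r), ?_, ?_⟩
        · have heq : toW g₀ ((a, h) :: (b, g) :: r)
              = ofBits g₀ ++ [sym a] ++ ofBits h ++ ([sym b] ++ toW g r) := by
            simp [toW, List.append_assoc]
          rw [heq]; exact hj
        · simpa [List.append_assoc] using hasCancel_pair (g₀ ++ emit a h) b (toW g r)
      · -- chain of tail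
        apply ih h
        intro j hpc
        obtain ⟨w', st, hcanc⟩ := hpc
        have hq : (ofBits g₀ ++ [sym a]).countP (fun x => isY x) = 1 := by
          cases a <;> simp [List.countP_append, countP_ofBits, sym]
        have lifted := rtg_advanceAt_prepend (ofBits g₀ ++ [sym a]) st
        rw [hq] at lifted
        refine hyp (1 + j) ⟨(ofBits g₀ ++ [sym a]) ++ w', ?_, ?_⟩
        · simpa [toW, List.append_assoc] using lifted
        · obtain ⟨u2, v2, hc2 | hc2⟩ := hcanc
          · exact ⟨(ofBits g₀ ++ [sym a]) ++ u2, v2, Or.inl (by simp [hc2])⟩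
          · exact ⟨(ofBits g₀ ++ [sym a]) ++ u2, v2, Or.inr (by simp [hc2])⟩

/-- if Λ has no potential cancellations and n occurrences of y±, then
there is a binary word u such that Λ·u can be advanced to s·yⁿ for some binary word s. -/
theorem advance_to_power_of_y (Λ : List YSym)
    (hΛ : ∀ j, ¬ PotentialCancellation j Λ) :
    ∃ u s : List Bool,
      Relation.ReflTransGen Advance (Λ ++ ofBits u)
        (ofBits s ++ List.replicate (Λ.countP (fun a => isY a)) YSym.yp) := by

  obtain ⟨u, E, h1, _⟩ := main (parse Λ).2
    (chain_of_hyp (parse Λ).2 (parse Λ).1 (by rw [toW_parse]; exact hΛ))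
  refine ⟨u, (parse Λ).1 ++ E, ?_⟩
  have h2 := h1 (parse Λ).1
  rw [toW_parse] at h2
  rw [count_parse]
  simpa using h2
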